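/- For the complete bipartite graph G = K_{n,b} with partite sets X of size n and Y of size b, G is (t,n)-choosable (i.e., L-colorable for every list assignment L with |L(x)| = t for x ∈ X and |L(y)| = n for y ∈ Y) if and only if b < t^n. -/

import Mathlib

open Finset

/-- `f` is a proper `L`-coloring of `G`: every vertex gets a color from its list and
adjacent vertices get different colors. -/
def properListColoring {V : Type*} (G : SimpleGraph V) (L : V → Finset ℕ) (f : V → ℕ) : Prop :=
  (∀ v, f v ∈ L v) ∧ ∀ u v, G.Adj u v → f u ≠ f v

private lemma block_decode {t : ℕ} {i i' r r' : ℕ} (hr : r < t) (hr' : r' < t)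
    (h : t * i + r = t * i' + r') : i = i' ∧ r = r' := by
  have h1 : (t * i + r) / t = i := by
    rw [Nat.mul_add_div (Nat.lt_of_le_of_lt (Nat.zero_le _) hr), Nat.div_eq_of_lt hr]; omega
  have h2 : (t * i' + r') / t = i' := by
    rw [Nat.mul_add_div (Nat.lt_of_le_of_lt (Nat.zero_le _) hr'), Nat.div_eq_of_lt hr']; omega
  have hi : i = i' := by rw [← h1, ← h2, h]
  subst hi
  exact ⟨rfl, by omega⟩

theorem stmt_1 (n b t : ℕ) (hn : 1 ≤ n) (hb : 1 ≤ b) (ht : 1 ≤ t) :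
    (∀ L : Fin n ⊕ Fin b → Finset ℕ,
        (∀ x : Fin n, (L (Sum.inl x)).card = t) →
        (∀ y : Fin b, (L (Sum.inr y)).card = n) →
        ∃ f, properListColoring (completeBipartiteGraph (Fin n) (Fin b)) L f) ↔
      b < t ^ n := by
  constructor
  · -- choosable → b < t^n, by contrapositive
    intro H
    by_contra hbt
    push_neg at hbt  -- hbt : t ^ n ≤ b
    -- Build the bad list assignment with disjoint blocks for X.
    set τ : Fin b → Fin n → ℕ := fun y i =>
      t * i + (if h : (y : ℕ) < t ^ n then
        ((finFunctionFinEquiv.symm ⟨(y : ℕ), h⟩ : Fin n → Fin t) i : ℕ) else 0) with hτ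
    have hτlt : ∀ y i, ∃ r : ℕ, r < t ∧ τ y i = t * i + r := by
      intro y i
      by_cases h : (y : ℕ) < t ^ n
      · exact ⟨_, (finFunctionFinEquiv.symm ⟨(y : ℕ), h⟩ i).isLt, by simp [hτ, h]⟩
      · exact ⟨0, ht, by simp [hτ, h]⟩
    set L : Fin n ⊕ Fin b → Finset ℕ := fun v =>
      match v with
      | Sum.inl i => (Finset.range t).image (fun r => t * i + r)
      | Sum.inr y => Finset.univ.image (τ y) with hL
    have hX : ∀ x : Fin n, (L (Sum.inl x)).card = t := by
      intro x
      rw [hL]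
      simp only
      rw [Finset.card_image_of_injective _ (fun a a' h => by omega), Finset.card_range]
    have hY : ∀ y : Fin b, (L (Sum.inr y)).card = n := by
      intro y
      rw [hL]
      simp only
      rw [Finset.card_image_of_injective, Finset.card_univ, Fintype.card_fin]
      intro i i' hii
      obtain ⟨r, hr, hre⟩ := hτlt y i
      obtain ⟨r', hr', hre'⟩ := hτlt y i'
      rw [hre, hre'] at hii
      exact Fin.ext ((block_decode hr hr' hii).1)
    obtain ⟨f, hf1, hf2⟩ := H L hX hY
    -- the colors chosen on X form a tuple p : Fin n → Fin t
    have hc : ∀ i : Fin n, ∃ p : Fin t, f (Sum.inl i) = t * i + p := by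
      intro i
      have := hf1 (Sum.inl i)
      rw [hL] at this
      simp only [Finset.mem_image, Finset.mem_range] at this
      obtain ⟨r, hr, hre⟩ := this
      exact ⟨⟨r, hr⟩, hre.symm⟩
    choose p hp using hc
    set y : Fin b := ⟨(finFunctionFinEquiv p : ℕ),
      lt_of_lt_of_le (finFunctionFinEquiv p).isLt hbt⟩ with hy
    have hyval : τ y = fun i => f (Sum.inl i) := by
      funext i
      have hlt : (y : ℕ) < t ^ n := (finFunctionFinEquiv p).isLt
      have : (⟨(y : ℕ), hlt⟩ : Fin (t ^ n)) = finFunctionFinEquiv p := rfl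
      simp only [hτ, dif_pos hlt, this, Equiv.symm_apply_apply]
      rw [hp i]
    -- f (inr y) must equal some f (inl i), contradicting properness
    have := hf1 (Sum.inr y)
    rw [hL] at this
    simp only [Finset.mem_image, Finset.mem_univ, true_and] at this
    obtain ⟨i, hi⟩ := this
    rw [hyval] at hi
    exact hf2 (Sum.inl i) (Sum.inr y) (by simp) hi
  · -- b < t^n → choosable
    intro hbt L hX hY
    set S : Finset (Fin n → ℕ) := Fintype.piFinset (fun i => L (Sum.inl i)) with hS
    have hScard : S.card = t ^ n := by
      rw [hS, Fintype.card_piFinset]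
      simp [hX]
    -- Claim: some tuple in S is unblocked.
    have key : ∃ c ∈ S, ∀ y : Fin b, ¬ L (Sum.inr y) ⊆ Finset.univ.image c := by
      by_contra hall
      push_neg at hall
      -- hall : ∀ c ∈ S, ∃ y, L (inr y) ⊆ image c
      choose φ hφ using hall
      have himg : ∀ c (hc : c ∈ S), Finset.univ.image c = L (Sum.inr (φ c hc)) := by
        intro c hc
        refine (Finset.eq_of_subset_of_card_le (hφ c hc) ?_).symm
        calc (Finset.univ.image c).card ≤ (Finset.univ : Finset (Fin n)).card :=
              Finset.card_image_le
          _ = n := by simp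
          _ = (L (Sum.inr (φ c hc))).card := (hY _).symm
      have hinj : ∀ c (hc : c ∈ S), Function.Injective c := by
        intro c hc
        have h1 : (Finset.univ.image c).card = (Finset.univ : Finset (Fin n)).card := by
          rw [himg c hc, hY]; simp
        have := Finset.card_image_iff.mp h1
        rw [Finset.coe_univ] at this
        exact Set.injOn_univ.mp this
      -- the image map is injective on S
      have himg_inj : ∀ c ∈ S, ∀ c' ∈ S,
          Finset.univ.image c = Finset.univ.image c' → c = c' := by
        intro c hc c' hc' he
        by_contra hne
        obtain ⟨i, hi⟩ := Function.ne_iff.mp hne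
        -- c' i ∈ image c' = image c, so c' i = c j for some j ≠ i
        have : c' i ∈ Finset.univ.image c := by
          rw [he]; exact Finset.mem_image_of_mem _ (Finset.mem_univ i)
        obtain ⟨j, _, hj⟩ := Finset.mem_image.mp this
        have hji : j ≠ i := fun h => hi (by rw [← hj, h])
        set d : Fin n → ℕ := Function.update c i (c' i) with hd
        have hdS : d ∈ S := by
          rw [hS, Fintype.mem_piFinset]
          intro k
          by_cases hk : k = i
          · subst hk; rw [hd, Function.update_self]
            exact Fintype.mem_piFinset.mp hc' k
          · rw [hd, Function.update_of_ne hk]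
            exact Fintype.mem_piFinset.mp hc k
        have hdinj := hinj d hdS
        have : d j = d i := by
          rw [hd, Function.update_self, Function.update_of_ne hji, hj]
        exact hji (hdinj this)
      -- so φ is injective on S, giving t^n ≤ b
      have : S.card ≤ (Finset.univ : Finset (Fin b)).card := by
        apply Finset.card_le_card_of_injOn (fun c => if hc : c ∈ S then φ c hc else ⟨0, hb⟩)
          (fun c _ => Finset.mem_univ _)
        intro c hc c' hc' he
        simp only [Finset.mem_coe] at hc hc'
        simp only [dif_pos hc, dif_pos hc'] at he
        apply himg_inj c hc c' hc'
        rw [himg c hc, himg c' hc', he]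
      rw [hScard] at this
      simp only [Finset.card_univ, Fintype.card_fin] at this
      omega
    obtain ⟨c, hcS, hcgood⟩ := key
    -- color Y vertices
    have hYcolor : ∀ y : Fin b, ∃ m, m ∈ L (Sum.inr y) ∧ m ∉ Finset.univ.image c := by
      intro y
      by_contra h
      push_neg at h
      exact hcgood y (fun m hm => h m hm)
    choose g hg1 hg2 using hYcolor
    refine ⟨Sum.elim c g, ?_, ?_⟩
    · intro v
      cases v with
      | inl i => exact Fintype.mem_piFinset.mp hcS i
      | inr y => exact hg1 y
    · intro u v huv
      cases u with
      | inl i =>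
        cases v with
        | inl i' => simp at huv
        | inr y =>
          intro h
          simp only [Sum.elim_inl, Sum.elim_inr] at h
          exact hg2 y (h ▸ Finset.mem_image_of_mem _ (Finset.mem_univ i))
      | inr y =>
        cases v with
        | inl i =>
          intro h
          simp only [Sum.elim_inl, Sum.elim_inr] at h
          exact hg2 y (h.symm ▸ Finset.mem_image_of_mem _ (Finset.mem_univ i))
        | inr y' => simp at huv
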